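/- Let p₁, ..., p_s ∈ ℂ, let d ∈ ℂ, and let R > max_j |p_j|. Then (1/(2πi)) ∮_{|z|=R} ∏_{j=1}^s (z − p_j + d)/(z − p_j) dz = s·d, where the circle |z| = R is traversed once counterclockwise. -/

import Mathlib

open Complex Finset Metric Filter

private lemma circleIntegral_finset_sum' {ι : Type*} (t : Finset ι) (f : ι → ℂ → ℂ) (c : ℂ)
    (r : ℝ) (h : ∀ i ∈ t, CircleIntegrable (f i) c r) :
    (∮ z in C(c, r), ∑ i ∈ t, f i z) = ∑ i ∈ t, ∮ z in C(c, r), f i z := by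
  simp only [circleIntegral, Finset.smul_sum]
  exact intervalIntegral.integral_finset_sum fun i hi => (h i hi).out

private lemma const_circleIntegral_zero (c : ℂ) (r : ℝ) :
    (∮ z in C(c, r), (1 : ℂ)) = 0 := by
  simpa using circleIntegral.integral_sub_zpow_of_ne (by decide : (0:ℤ) ≠ -1) c c r

/-- Key vanishing lemma: if at least two (with multiplicity) simple-pole factors occur,
the contour integral of the product of inverses vanishes. -/
private lemma prod_inv_circleIntegral_zero {s : ℕ} (p : Fin s → ℂ) (t : Finset (Fin s))
    (ht : 2 ≤ t.card) {R : ℝ} (hR : ∀ j, ‖p j‖ < R) :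
    (∮ z in C(0, R), ∏ j ∈ t, (z - p j)⁻¹) = 0 := by
  obtain ⟨j₀, hj₀⟩ := Finset.card_pos.mp (by omega : 0 < t.card)
  have hR0 : 0 < R := (norm_nonneg (p j₀)).trans_lt (hR j₀)
  set F : ℂ → ℂ := fun z => ∏ j ∈ t, (z - p j)⁻¹ with hF
  -- differentiability off the closed ball of radius < R is not needed; we use annuli
  have hdiff : ∀ r : ℝ, R ≤ r → ∀ z ∈ closedBall (0:ℂ) r \ ball (0:ℂ) R,
      DifferentiableAt ℂ F z := by
    intro r hr z hz
    have hzR : R ≤ ‖z‖ := by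
      simpa using (mem_ball.not.mp hz.2)
    refine DifferentiableAt.fun_finsetProd fun i hi => ?_
    have hzi : z - p i ≠ 0 := by
      intro h
      have : z = p i := by linear_combination h
      exact absurd (this ▸ hzR) (not_le.mpr (hR i))
    exact ((differentiableAt_id.sub_const _).inv hzi)
  have hconst : ∀ r : ℝ, R ≤ r → (∮ z in C(0, r), F z) = ∮ z in C(0, R), F z := by
    intro r hr
    refine circleIntegral_eq_of_differentiable_on_annulus_off_countable hR0 hr
      Set.countable_empty (fun z hz => (hdiff r hr z hz).continuousAt.continuousWithinAt)
      (fun z hz => hdiff r hr z ⟨ball_subset_closedBall hz.1.1,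
        fun hb => hz.1.2 (ball_subset_closedBall hb)⟩)
  have hbound : ∀ r : ℝ, R + 1 ≤ r →
      ‖∮ z in C(0, R), F z‖ ≤ 2 * Real.pi * r * ((r - R) ^ 2)⁻¹ := by
    intro r hr
    rw [← hconst r (by linarith)]
    refine circleIntegral.norm_integral_le_of_norm_le_const (by linarith) ?_
    intro z hz
    have hzr : ‖z‖ = r := by simpa using hz
    have hfac : ∀ i ∈ t, ‖(z - p i)⁻¹‖ ≤ (r - R)⁻¹ := by
      intro i _
      have h1 : r - R ≤ ‖z - p i‖ := by
        have h2 : ‖z‖ - ‖p i‖ ≤ ‖z - p i‖ := by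
          simpa using norm_sub_norm_le z (p i)
        rw [hzr] at h2
        have := (hR i).le
        linarith
      rw [norm_inv]
      exact inv_anti₀ (by linarith) (by simpa using h1)
    calc ‖F z‖ ≤ ∏ i ∈ t, (r - R)⁻¹ := by
          rw [hF]
          refine (Finset.norm_prod_le _ _).trans (Finset.prod_le_prod (fun i _ => norm_nonneg _) hfac)
      _ = ((r - R) ^ t.card)⁻¹ := by rw [Finset.prod_const, inv_pow]
      _ ≤ ((r - R) ^ 2)⁻¹ := by
          refine inv_anti₀ (pow_pos (by linarith) 2) ?_
          exact pow_le_pow_right₀ (by linarith) ht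
  -- the bound tends to 0
  have htend : Tendsto (fun r : ℝ => 2 * Real.pi * r * ((r - R) ^ 2)⁻¹) atTop (nhds 0) := by
    have h1 : Tendsto (fun r : ℝ => r - R) atTop atTop :=
      tendsto_atTop_add_const_right atTop (-R) tendsto_id
    have h2 : Tendsto (fun r : ℝ => (r - R)⁻¹) atTop (nhds 0) := h1.inv_tendsto_atTop
    have h3 : Tendsto (fun r : ℝ =>
        2 * Real.pi * ((r - R)⁻¹ + R * ((r - R)⁻¹) ^ 2)) atTop (nhds 0) := by
      have := ((h2.add ((tendsto_const_nhds (x := R)).mul (h2.pow 2))).const_mul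
        (2 * Real.pi))
      simpa using this
    refine h3.congr' ?_
    filter_upwards [eventually_gt_atTop R] with r hr
    have hne : r - R ≠ 0 := (sub_pos.mpr hr).ne'
    field_simp
    ring
  have hnorm : ‖∮ z in C(0, R), F z‖ ≤ 0 := by
    refine ge_of_tendsto htend ?_
    filter_upwards [eventually_ge_atTop (R + 1)] with r hr
    exact hbound r hr
  simpa [hF] using norm_le_zero_iff.mp hnorm

/-- **Lemma (exact contour integral).** Let `p₁, …, p_s ∈ ℂ`, `d ∈ ℂ`, and `R > max_j |p_j|`.
Then `(1/(2πi)) ∮_{|z|=R} ∏_j (z − p_j + d)/(z − p_j) dz = s·d`, the circle `|z| = R`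
traversed once counterclockwise. -/
theorem contour_integral_eq (s : ℕ) (p : Fin s → ℂ) (d : ℂ) (R : ℝ)
    (hR : ∀ j, ‖p j‖ < R) :
    (2 * Real.pi * Complex.I)⁻¹ *
        (∮ z in C(0, R), ∏ j : Fin s, (z - p j + d) / (z - p j)) = s * d := by
  rcases Nat.eq_zero_or_pos s with rfl | hs
  · simp [const_circleIntegral_zero]
  have hR0 : 0 < R := (norm_nonneg (p ⟨0, hs⟩)).trans_lt (hR ⟨0, hs⟩)
  have hsub : ∀ z ∈ sphere (0:ℂ) R, ∀ j, z - p j ≠ 0 := by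
    intro z hz j h
    have hzr : ‖z‖ = R := by simpa using hz
    have : z = p j := by linear_combination h
    exact absurd (this ▸ hR j) (by simp [hzr])
  -- rewrite the integrand as a sum over subsets
  have hcongr : (∮ z in C(0, R), ∏ j : Fin s, (z - p j + d) / (z - p j)) =
      ∮ z in C(0, R), ∑ t ∈ (Finset.univ : Finset (Fin s)).powerset,
        ∏ i ∈ t, (d * (z - p i)⁻¹) := by
    refine circleIntegral.integral_congr hR0.le fun z hz => ?_
    have h1 : ∀ j : Fin s, (z - p j + d) / (z - p j) = d * (z - p j)⁻¹ + 1 := by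
      intro j
      have := hsub z hz j
      field_simp
      ring
    calc ∏ j : Fin s, (z - p j + d) / (z - p j)
        = ∏ j : Fin s, (d * (z - p j)⁻¹ + 1) := by simp_rw [h1]
      _ = ∑ t ∈ (Finset.univ : Finset (Fin s)).powerset,
            ∏ i ∈ t, (d * (z - p i)⁻¹) := by
          rw [Finset.prod_add]; simp
  have hint : ∀ t ∈ (Finset.univ : Finset (Fin s)).powerset,
      CircleIntegrable (fun z => ∏ i ∈ t, (d * (z - p i)⁻¹)) 0 R := by
    intro t _
    refine ContinuousOn.circleIntegrable hR0.le ?_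
    refine continuousOn_finset_prod t fun i _ => ?_
    refine continuousOn_const.mul (ContinuousOn.inv₀
      ((continuousOn_id.sub continuousOn_const)) fun z hz => hsub z hz i)
  have hterm : ∀ t ∈ (Finset.univ : Finset (Fin s)).powerset,
      (∮ z in C(0, R), ∏ i ∈ t, (d * (z - p i)⁻¹)) =
        if t.card = 1 then d * (2 * Real.pi * Complex.I) else 0 := by
    intro t _
    have hpull : (∮ z in C(0, R), ∏ i ∈ t, (d * (z - p i)⁻¹)) =
        d ^ t.card * ∮ z in C(0, R), ∏ i ∈ t, (z - p i)⁻¹ := by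
      rw [← circleIntegral.integral_const_mul]
      refine circleIntegral.integral_congr hR0.le fun z _ => ?_
      rw [Finset.prod_mul_distrib, Finset.prod_const]
    rcases Nat.lt_or_ge t.card 2 with hc | hc
    · interval_cases h : t.card
      · have ht : t = ∅ := Finset.card_eq_zero.mp h
        subst ht
        simp [const_circleIntegral_zero]
      · obtain ⟨j, rfl⟩ := Finset.card_eq_one.mp h
        rw [hpull]
        have : (∮ z in C(0, R), ∏ i ∈ ({j} : Finset (Fin s)), (z - p i)⁻¹) =
            2 * Real.pi * Complex.I := by
          simp only [Finset.prod_singleton]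
          exact circleIntegral.integral_sub_inv_of_mem_ball
            (by simpa using hR j)
        rw [this]
        simp [Finset.card_singleton]
    · rw [hpull, prod_inv_circleIntegral_zero p t hc hR, mul_zero, if_neg (by omega)]
  rw [hcongr, circleIntegral_finset_sum' _ _ _ _ hint, Finset.sum_congr rfl hterm,
    ← Finset.sum_filter]
  rw [← Finset.powersetCard_eq_filter, Finset.sum_const, Finset.card_powersetCard,
    Finset.card_univ, Fintype.card_fin, Nat.choose_one_right, nsmul_eq_mul]
  have hne : (2 * Real.pi * Complex.I) ≠ 0 := by
    simp [Real.pi_ne_zero, Complex.I_ne_zero]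
  field_simp
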